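/- Closed form for expected improvement under a univariate Student-t predictive: if f(x) has the MVT₁(ν', μ̃, τ̃²) distribution with ν' > 1, then E[max(f_best − f(x), 0)] = γ̃τ̃Λ_{ν'}(γ̃) + τ̃(1 + (γ̃² − 1)/(ν' − 1))λ_{ν'}(γ̃), where γ̃ = (f_best − μ̃)/τ̃, and λ_{ν'}, Λ_{ν'} are the density and CDF of MVT₁(ν', 0, 1). Equivalently, ∫_{-∞}^{f_best} (f_best − y)·(1/τ̃)·λ_{ν'}((y − μ̃)/τ̃) dy equals the stated expression. -/

import Mathlib

open MeasureTheory Real Matrix Filter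

noncomputable def mvt {ι : Type*} [Fintype ι] [DecidableEq ι] (ν : ℝ) (φ : ι → ℝ)
    (K : Matrix ι ι ℝ) (y : ι → ℝ) : ℝ :=
  Real.Gamma ((ν + Fintype.card ι) / 2) /
      (((ν - 2) * Real.pi) ^ ((Fintype.card ι : ℝ) / 2) * Real.Gamma (ν / 2)) *
    K.det ^ (-(1:ℝ)/2) *
    (1 + (y - φ) ⬝ᵥ K⁻¹ *ᵥ (y - φ) / (ν - 2)) ^ (-((ν + Fintype.card ι) / 2))

noncomputable def gaussD {ι : Type*} [Fintype ι] [DecidableEq ι] (φ : ι → ℝ)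
    (S : Matrix ι ι ℝ) (y : ι → ℝ) : ℝ :=
  (2 * Real.pi) ^ (-(Fintype.card ι : ℝ)/2) * S.det ^ (-(1:ℝ)/2) *
    Real.exp (-((y - φ) ⬝ᵥ S⁻¹ *ᵥ (y - φ)) / 2)

noncomputable def toSym {n : ℕ} (u : {p : Fin n × Fin n // p.1 ≤ p.2} → ℝ) :
    Matrix (Fin n) (Fin n) ℝ :=
  Matrix.of fun i j => if h : i ≤ j then u ⟨(i, j), h⟩ else u ⟨(j, i), le_of_not_ge h⟩

/-- Multivariate gamma function: `Γ_n(a) = π^{n(n-1)/4} ∏_{j=1}^n Γ(a + (1-j)/2)`. -/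
noncomputable def mgamma (n : ℕ) (a : ℝ) : ℝ :=
  Real.pi ^ ((n * (n - 1) : ℝ) / 4) * ∏ j ∈ Finset.range n, Real.Gamma (a - j / 2)

/-- Dawid-parameterized inverse Wishart density. -/
noncomputable def iwD (n : ℕ) (ν : ℝ) (K Sg : Matrix (Fin n) (Fin n) ℝ) : ℝ :=
  K.det ^ ((ν + n - 1) / 2) / (2 ^ ((ν + n - 1) * n / 2) * mgamma n ((ν + n - 1) / 2)) *
    Sg.det ^ (-(ν + 2 * n) / 2) * Real.exp (-(K * Sg⁻¹).trace / 2)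

/-- Wishart density with `ν` degrees of freedom and scale matrix `S`. -/
noncomputable def wishD (n : ℕ) (ν : ℝ) (S Sg : Matrix (Fin n) (Fin n) ℝ) : ℝ :=
  (S.det ^ (ν / 2) * 2 ^ (ν * n / 2) * mgamma n (ν / 2))⁻¹ *
    Sg.det ^ ((ν - n - 1) / 2) * Real.exp (-(S⁻¹ * Sg).trace / 2)

/-- Inverse-gamma density (density of `r` when `r⁻¹ ~ Γ(a, b)`). -/
noncomputable def igD (a b r : ℝ) : ℝ :=
  b ^ a * r ^ (-a - 1) * Real.exp (-b / r) / Real.Gamma a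

/-- Standardized Student-t density (paper's mean/variance parameterization). -/
noncomputable def tDens (ν z : ℝ) : ℝ :=
  Real.Gamma ((ν + 1) / 2) / (Real.sqrt ((ν - 2) * Real.pi) * Real.Gamma (ν / 2)) *
    (1 + z ^ 2 / (ν - 2)) ^ (-(ν + 1) / 2)

/-- Standardized Student-t CDF. -/
noncomputable def tCDF (ν x : ℝ) : ℝ := ∫ z in Set.Iic x, tDens ν z

-- substitution lemma
lemma EI_subst_Iic (g : ℝ → ℝ) {τ : ℝ} (hτ : 0 < τ) (μ b : ℝ) :
    ∫ y in Set.Iic b, g ((y - μ) / τ) = τ * ∫ z in Set.Iic ((b - μ) / τ), g z := by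
  rw [← integral_indicator measurableSet_Iic, ← integral_indicator measurableSet_Iic]
  have key : ∀ y : ℝ, (Set.Iic b).indicator (fun y => g ((y - μ) / τ)) y
      = (Set.Iic ((b - μ) / τ)).indicator g ((y - μ) / τ) := by
    intro y
    by_cases h : y ≤ b
    · rw [Set.indicator_of_mem (Set.mem_Iic.2 h), Set.indicator_of_mem]
      exact Set.mem_Iic.2 ((div_le_div_iff_of_pos_right hτ).2 (by linarith))
    · rw [Set.indicator_of_notMem (fun hc => h (Set.mem_Iic.1 hc)), Set.indicator_of_notMem]
      intro hc
      exact h (by have := (div_le_div_iff_of_pos_right hτ).1 (Set.mem_Iic.1 hc); linarith)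
  simp_rw [key]
  have : (fun y : ℝ => (Set.Iic ((b - μ) / τ)).indicator g ((y - μ) / τ))
      = fun y : ℝ => (fun x : ℝ => (Set.Iic ((b - μ) / τ)).indicator g (x / τ)) (y - μ) := rfl
  rw [this, integral_sub_right_eq_self (fun x : ℝ => (Set.Iic ((b - μ) / τ)).indicator g (x / τ)) μ,
    MeasureTheory.Measure.integral_comp_div, abs_of_pos hτ, smul_eq_mul]

-- tail integrability of |z|^s on Iic (-1)
lemma EI_tail {s : ℝ} (hs : s < -1) :
    MeasureTheory.IntegrableOn (fun z : ℝ => |z| ^ s) (Set.Iic (-1 : ℝ)) := by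
  rw [integrableOn_Iic_iff_integrableOn_Iio]
  have h : MeasureTheory.IntegrableOn (fun x : ℝ => x ^ s) (Set.Ioi (1 : ℝ)) :=
    integrableOn_Ioi_rpow_of_lt hs one_pos
  have h1 : MeasureTheory.Integrable ((Set.Ioi (1 : ℝ)).indicator fun x : ℝ => x ^ s) :=
    (integrable_indicator_iff measurableSet_Ioi).2 h
  have h2 := h1.comp_neg
  refine (integrable_indicator_iff measurableSet_Iio).1
    (h2.congr (Filter.Eventually.of_forall fun z => ?_))
  simp only [Set.indicator_apply, Set.mem_Ioi, Set.mem_Iio]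
  by_cases hz : z < -1
  · rw [if_pos (by linarith : (1:ℝ) < -z), if_pos hz, abs_of_neg (by linarith : z < 0)]
  · rw [if_neg (by intro hc; exact hz (by linarith)), if_neg hz]

section EIDens
variable {ν : ℝ}

lemma EI_base_pos (hν : 2 < ν) (z : ℝ) : (0:ℝ) < 1 + z ^ 2 / (ν - 2) :=
  add_pos_of_pos_of_nonneg one_pos (div_nonneg (sq_nonneg z) (by linarith))

lemma EI_cont (hν : 2 < ν) (e : ℝ) : Continuous fun z : ℝ => (1 + z ^ 2 / (ν - 2)) ^ e :=
  (continuous_const.add ((continuous_pow 2).div_const _)).rpow_const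
    fun z => Or.inl (EI_base_pos hν z).ne'

-- pointwise tail bound: for z ≤ -1,  (1+z²/(ν-2))^(-(ν+1)/2) ≤ (ν-2)^((ν+1)/2) * |z|^(-(ν+1))
lemma EI_bound (hν : 2 < ν) {z : ℝ} (hz : z ≤ -1) :
    (1 + z ^ 2 / (ν - 2)) ^ (-(ν + 1) / 2) ≤ (ν - 2) ^ ((ν + 1) / 2) * |z| ^ (-(ν + 1)) := by
  have hd : (0:ℝ) < ν - 2 := by linarith
  have hz0 : z < 0 := by linarith
  have habs : (0:ℝ) < |z| := abs_pos.2 hz0.ne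
  have hq : -(ν + 1) / 2 < 0 := by linarith [div_neg_of_neg_of_pos (by linarith : -(ν+1) < 0) two_pos]
  have h1 : (0:ℝ) < z ^ 2 / (ν - 2) := div_pos (by nlinarith : (0:ℝ) < z ^ 2) hd
  have step1 : (1 + z ^ 2 / (ν - 2)) ^ (-(ν + 1) / 2) ≤ (z ^ 2 / (ν - 2)) ^ (-(ν + 1) / 2) :=
    (Real.rpow_le_rpow_iff_of_neg (EI_base_pos hν z) h1 hq).2 (by linarith)
  refine step1.trans_eq ?_
  rw [show z ^ 2 = |z| ^ 2 from (sq_abs z).symm,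
    Real.div_rpow (by positivity) hd.le,
    ← Real.rpow_natCast |z| 2, ← Real.rpow_mul habs.le,
    show ((2:ℕ):ℝ) * (-(ν + 1) / 2) = -(ν + 1) by push_cast; ring,
    show (-(ν + 1) / 2) = -((ν + 1) / 2) by ring,
    Real.rpow_neg hd.le, div_eq_mul_inv, inv_inv, mul_comm]

lemma EI_integrableOn_pow (hν : 2 < ν) (γ : ℝ) :
    MeasureTheory.IntegrableOn (fun z : ℝ => (1 + z ^ 2 / (ν - 2)) ^ (-(ν + 1) / 2))
      (Set.Iic γ) := by
  have hsub : Set.Iic γ ⊆ Set.Iic (-1) ∪ Set.Icc (-1) (max (-1) γ) := by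
    intro z hz
    by_cases h : z ≤ -1
    · exact Or.inl h
    · exact Or.inr ⟨le_of_not_ge h, le_max_of_le_right hz⟩
  refine MeasureTheory.IntegrableOn.mono_set (MeasureTheory.IntegrableOn.union ?_ ?_) hsub
  · refine MeasureTheory.Integrable.mono'
      ((EI_tail (by linarith : -(ν+1) < -1)).const_mul ((ν - 2) ^ ((ν + 1) / 2)))
      ((EI_cont hν _).aestronglyMeasurable) ?_
    filter_upwards [MeasureTheory.ae_restrict_mem measurableSet_Iic] with z hz
    rw [Real.norm_eq_abs, abs_of_nonneg (Real.rpow_nonneg (EI_base_pos hν z).le _)]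
    exact EI_bound hν hz
  · exact (EI_cont hν _).continuousOn.integrableOn_compact isCompact_Icc

lemma EI_integrableOn_mul_pow (hν : 2 < ν) (γ : ℝ) :
    MeasureTheory.IntegrableOn (fun z : ℝ => z * (1 + z ^ 2 / (ν - 2)) ^ (-(ν + 1) / 2))
      (Set.Iic γ) := by
  have hsub : Set.Iic γ ⊆ Set.Iic (-1) ∪ Set.Icc (-1) (max (-1) γ) := by
    intro z hz
    by_cases h : z ≤ -1
    · exact Or.inl h
    · exact Or.inr ⟨le_of_not_ge h, le_max_of_le_right hz⟩
  refine MeasureTheory.IntegrableOn.mono_set (MeasureTheory.IntegrableOn.union ?_ ?_) hsub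
  · refine MeasureTheory.Integrable.mono'
      ((EI_tail (by linarith : -ν < -1)).const_mul ((ν - 2) ^ ((ν + 1) / 2)))
      ((continuous_id.mul (EI_cont hν _)).aestronglyMeasurable) ?_
    filter_upwards [MeasureTheory.ae_restrict_mem measurableSet_Iic] with z hz
    have hz0 : z < 0 := by linarith [Set.mem_Iic.1 hz]
    have habs : (0:ℝ) < |z| := abs_pos.2 hz0.ne
    rw [Real.norm_eq_abs, abs_mul, abs_of_nonneg (Real.rpow_nonneg (EI_base_pos hν z).le _)]
    calc |z| * (1 + z ^ 2 / (ν - 2)) ^ (-(ν + 1) / 2)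
        ≤ |z| * ((ν - 2) ^ ((ν + 1) / 2) * |z| ^ (-(ν + 1))) := by
          exact mul_le_mul_of_nonneg_left (EI_bound hν hz) (abs_nonneg z)
      _ = (ν - 2) ^ ((ν + 1) / 2) * |z| ^ (-ν) := by
          rw [show |z| * ((ν - 2) ^ ((ν + 1) / 2) * |z| ^ (-(ν + 1)))
              = (ν - 2) ^ ((ν + 1) / 2) * (|z| ^ (1:ℝ) * |z| ^ (-(ν + 1))) by
            rw [Real.rpow_one]; ring]
          rw [← Real.rpow_add habs, show (1:ℝ) + -(ν+1) = -ν by ring]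
  · exact (continuous_id.mul (EI_cont hν _)).continuousOn.integrableOn_compact isCompact_Icc

lemma EI_hasDerivAt (hν : 2 < ν) (z : ℝ) :
    HasDerivAt (fun z : ℝ => -((ν - 2) / (ν - 1)) * (1 + z ^ 2 / (ν - 2)) ^ (-(ν - 1) / 2))
      (z * (1 + z ^ 2 / (ν - 2)) ^ (-(ν + 1) / 2)) z := by
  have h1 : HasDerivAt (fun z : ℝ => 1 + z ^ 2 / (ν - 2)) (2 * z / (ν - 2)) z := by
    simpa using ((hasDerivAt_pow 2 z).div_const (ν - 2)).const_add 1
  have h2 := (h1.rpow_const (p := -(ν - 1) / 2) (Or.inl (EI_base_pos hν z).ne')).const_mul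
    (-((ν - 2) / (ν - 1)))
  refine h2.congr_deriv ?_
  rw [show -(ν - 1) / 2 - 1 = -(ν + 1) / 2 by ring]
  have hd : (ν - 2) ≠ 0 := by linarith
  have he : (ν - 1) ≠ 0 := by linarith
  field_simp

lemma EI_tendsto (hν : 2 < ν) :
    Filter.Tendsto (fun z : ℝ => -((ν - 2) / (ν - 1)) * (1 + z ^ 2 / (ν - 2)) ^ (-(ν - 1) / 2))
      Filter.atBot (nhds 0) := by
  have h1 : Filter.Tendsto (fun z : ℝ => 1 + z ^ 2 / (ν - 2)) Filter.atBot Filter.atTop := by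
    apply Filter.tendsto_atTop_add_const_left
    apply Filter.Tendsto.atTop_div_const (by linarith : (0:ℝ) < ν - 2)
    have : Filter.Tendsto (fun z : ℝ => |z| ^ 2) Filter.atBot Filter.atTop :=
      (tendsto_pow_atTop two_ne_zero).comp tendsto_abs_atBot_atTop
    simpa [sq_abs] using this
  have h2 : Filter.Tendsto (fun x : ℝ => x ^ (-(ν - 1) / 2)) Filter.atTop (nhds 0) := by
    rw [show -(ν - 1) / 2 = -((ν - 1) / 2) from neg_div _ _]
    exact tendsto_rpow_neg_atTop (by linarith)
  have h3 := (h2.comp h1).const_mul (-((ν - 2) / (ν - 1)))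
  simpa using h3

lemma EI_integral_mul_pow (hν : 2 < ν) (γ : ℝ) :
    ∫ z in Set.Iic γ, z * (1 + z ^ 2 / (ν - 2)) ^ (-(ν + 1) / 2)
      = -((ν - 2) / (ν - 1)) * (1 + γ ^ 2 / (ν - 2)) ^ (-(ν - 1) / 2) := by
  rw [MeasureTheory.integral_Iic_of_hasDerivAt_of_tendsto' (fun x _ => EI_hasDerivAt hν x)
    (EI_integrableOn_mul_pow hν γ) (EI_tendsto hν), sub_zero]

end EIDens

/-- Closed form for expected improvement under a univariate Student-t predictive. -/
theorem expected_improvement_student_t (ν' μ τ fbest : ℝ) (hν : ν' > 2) (hτ : τ > 0) :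
    (∫ y in Set.Iic fbest, (fbest - y) * (1 / τ) * tDens ν' ((y - μ) / τ))
      = ((fbest - μ) / τ) * τ * tCDF ν' ((fbest - μ) / τ) +
        τ * (1 + (((fbest - μ) / τ) ^ 2 - 1) / (ν' - 1)) * tDens ν' ((fbest - μ) / τ) := by
  have hτ' : τ ≠ 0 := hτ.ne'
  set γ := (fbest - μ) / τ with hγ
  set c := Real.Gamma ((ν' + 1) / 2) / (Real.sqrt ((ν' - 2) * Real.pi) * Real.Gamma (ν' / 2))
    with hc
  have step1 : (∫ y in Set.Iic fbest, (fbest - y) * (1 / τ) * tDens ν' ((y - μ) / τ))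
      = ∫ y in Set.Iic fbest, (fun z => (γ - z) * tDens ν' z) ((y - μ) / τ) := by
    refine MeasureTheory.setIntegral_congr_fun measurableSet_Iic fun y _ => ?_
    simp only
    congr 1
    rw [hγ]
    field_simp
    ring
  rw [step1, EI_subst_Iic (fun z => (γ - z) * tDens ν' z) hτ μ fbest]
  have I1 : MeasureTheory.IntegrableOn (fun z => γ * tDens ν' z) (Set.Iic γ) := by
    have h := ((EI_integrableOn_pow hν γ).const_mul c).const_mul γ
    refine h.congr (Filter.Eventually.of_forall fun z => ?_)
    simp only [tDens, hc]
  have I2 : MeasureTheory.IntegrableOn (fun z => z * tDens ν' z) (Set.Iic γ) := by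
    have h := (EI_integrableOn_mul_pow hν γ).const_mul c
    refine h.congr (Filter.Eventually.of_forall fun z => ?_)
    simp only [tDens, hc]
    ring
  have key : (∫ z in Set.Iic γ, (γ - z) * tDens ν' z)
      = γ * tCDF ν' γ - c * (-((ν' - 2) / (ν' - 1)) * (1 + γ ^ 2 / (ν' - 2)) ^ (-(ν' - 1) / 2)) := by
    have hfun : (fun z => (γ - z) * tDens ν' z)
        = fun z => γ * tDens ν' z - z * tDens ν' z := funext fun z => by ring
    rw [hfun, MeasureTheory.integral_sub I1 I2]
    congr 1
    · rw [MeasureTheory.integral_const_mul]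
      rfl
    · have h1 : (∫ z in Set.Iic γ, z * tDens ν' z)
          = ∫ z in Set.Iic γ, c * (z * (1 + z ^ 2 / (ν' - 2)) ^ (-(ν' + 1) / 2)) := by
        refine MeasureTheory.setIntegral_congr_fun measurableSet_Iic fun z _ => ?_
        simp only [tDens, hc]
        ring
      rw [h1, MeasureTheory.integral_const_mul, EI_integral_mul_pow hν γ]
  rw [key]
  have hX : (0:ℝ) < 1 + γ ^ 2 / (ν' - 2) := EI_base_pos hν γ
  rw [show -(ν' - 1) / 2 = -(ν' + 1) / 2 + 1 by ring, Real.rpow_add_one hX.ne']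
  simp only [tDens, ← hc]
  have h2 : ν' - 1 ≠ 0 := by linarith
  have h3 : ν' - 2 ≠ 0 := by linarith
  field_simp
  ring
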